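/- arXiv:2605.15174 — 3 statements merged into one kernel-verified Lean document; each statement's English description precedes it below -/
import Mathlib

section
/- For ε ∈ (0,1), δ ∈ (0, ε), and ν ∈ (0, δ), the binary fidelity satisfies F₂(ε−δ, 1−ε+ν) ≤ 4ε(1−ε+δ), where F₂(p,q) := (√(pq) + √((1−p)(1−q)))². -/
/-- The binary (squared classical) fidelity `F₂(p,q) = (√(pq) + √((1-p)(1-q)))²`. -/
noncomputable def binFidelity (p q : ℝ) : ℝ :=
  (Real.sqrt (p * q) + Real.sqrt ((1 - p) * (1 - q))) ^ 2

theorem binary_fidelity_bound (ε δ ν : ℝ) (hε0 : 0 < ε) (hε1 : ε < 1)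
    (hδ0 : 0 < δ) (hδε : δ < ε) (hν0 : 0 < ν) (hνδ : ν < δ) :
    binFidelity (ε - δ) (1 - ε + ν) ≤ 4 * ε * (1 - ε + δ) := by
  unfold binFidelity
  set s := Real.sqrt (ε * (1 - ε + δ)) with hs
  have hprod : (0:ℝ) ≤ ε * (1 - ε + δ) := by nlinarith
  have h1 : Real.sqrt ((ε - δ) * (1 - ε + ν)) ≤ s :=
    Real.sqrt_le_sqrt (by nlinarith)
  have h2 : Real.sqrt ((1 - (ε - δ)) * (1 - (1 - ε + ν))) ≤ s :=
    Real.sqrt_le_sqrt (by nlinarith)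
  have hsum : Real.sqrt ((ε - δ) * (1 - ε + ν)) +
      Real.sqrt ((1 - (ε - δ)) * (1 - (1 - ε + ν))) ≤ 2 * s := by linarith
  have hnn : (0:ℝ) ≤ Real.sqrt ((ε - δ) * (1 - ε + ν)) +
      Real.sqrt ((1 - (ε - δ)) * (1 - (1 - ε + ν))) := by positivity
  calc (Real.sqrt ((ε - δ) * (1 - ε + ν)) +
      Real.sqrt ((1 - (ε - δ)) * (1 - (1 - ε + ν)))) ^ 2
      ≤ (2 * s) ^ 2 := by apply pow_le_pow_left₀ hnn hsum
    _ = 4 * (s ^ 2) := by ring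
    _ = 4 * (ε * (1 - ε + δ)) := by rw [hs, Real.sq_sqrt hprod]
    _ = 4 * ε * (1 - ε + δ) := by ring
end

section
/- Approximate quasi-concavity of the smooth max-relative entropy: let (p(x), ρ_x)_{x∈X} be a finite ensemble of density matrices and σ another density matrix on the same finite-dimensional Hilbert space. Then for all ε, μ ∈ (0,1) with ε + μ ≤ 1, min_x D_max^{ε+μ,P}(ρ_x‖σ) ≤ D_max^{ε,P}(Σ_x p(x) ρ_x ‖ σ) + log(|X| / ((ε+μ)² − ε²)). -/
open scoped ComplexOrder BigOperators

noncomputable section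

/-- Trace norm `‖A‖₁ = Tr √(AᴴA)`. -/
noncomputable def traceNorm {n : Type*} [Fintype n] [DecidableEq n] (A : Matrix n n ℂ) : ℝ :=
  (((Matrix.posSemidef_conjTranspose_mul_self A).1.eigenvectorUnitary.1 *
      Matrix.diagonal (((↑) : ℝ → ℂ) ∘ (√·) ∘ (Matrix.posSemidef_conjTranspose_mul_self A).1.eigenvalues) *
      (star (Matrix.posSemidef_conjTranspose_mul_self A).1.eigenvectorUnitary : Matrix n n ℂ)).trace).re

/-- Positive-semidefinite square root (junk value `0` off PSD matrices). -/
noncomputable def psqrt {n : Type*} [Fintype n] [DecidableEq n] (A : Matrix n n ℂ) :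
    Matrix n n ℂ :=
  open scoped Classical in
  if h : A.PosSemidef then
    h.1.eigenvectorUnitary.1 * Matrix.diagonal ((↑) ∘ (√·) ∘ h.1.eigenvalues) *
      (star h.1.eigenvectorUnitary : Matrix n n ℂ) else 0

/-- Fidelity `F(ρ,σ) = ‖√ρ √σ‖₁`. -/
noncomputable def fidelity {n : Type*} [Fintype n] [DecidableEq n] (ρ σ : Matrix n n ℂ) : ℝ :=
  traceNorm (psqrt ρ * psqrt σ)

/-- Density matrix predicate. -/
def IsDensity {n : Type*} [Fintype n] [DecidableEq n] (ρ : Matrix n n ℂ) : Prop :=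
  ρ.PosSemidef ∧ ρ.trace = 1

/-- Loewner order `A ≤ B`. -/
def loewnerLE {n : Type*} [Fintype n] [DecidableEq n] (A B : Matrix n n ℂ) : Prop :=
  (B - A).PosSemidef

/-- Purified distance `P(ρ,σ) = √(1 - F(ρ,σ)²)`. -/
noncomputable def purifiedDist {n : Type*} [Fintype n] [DecidableEq n]
    (ρ σ : Matrix n n ℂ) : ℝ :=
  Real.sqrt (1 - (fidelity ρ σ) ^ 2)

/-- Max-relative entropy `D_max(ρ‖σ) = log₂ min{λ ≥ 0 : ρ ≤ λσ}` (`⊤` if infeasible). -/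
noncomputable def Dmax {n : Type*} [Fintype n] [DecidableEq n] (ρ σ : Matrix n n ℂ) : EReal :=
  sInf {x : EReal | ∃ l : ℝ, 0 ≤ l ∧ loewnerLE ρ ((l : ℂ) • σ) ∧ x = ((Real.logb 2 l : ℝ) : EReal)}

/-- Purified-distance-smoothed max-relative entropy. -/
noncomputable def DmaxSmooth {n : Type*} [Fintype n] [DecidableEq n]
    (ε : ℝ) (ρ σ : Matrix n n ℂ) : EReal :=
  sInf {x : EReal | ∃ ω : Matrix n n ℂ, IsDensity ω ∧ purifiedDist ρ ω ≤ ε ∧ x = Dmax ω σ}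

/-- A test (POVM effect): `0 ≤ E ≤ 1`. -/
def IsTest {n : Type*} [Fintype n] [DecidableEq n] (E : Matrix n n ℂ) : Prop :=
  E.PosSemidef ∧ (1 - E).PosSemidef

/-- Hypothesis testing relative entropy
`D_H^ε(ρ‖σ) = -log₂ min{Tr σE : 0 ≤ E ≤ 1, Tr ρE ≥ 1-ε}`. -/
noncomputable def DH {n : Type*} [Fintype n] [DecidableEq n]
    (ε : ℝ) (ρ σ : Matrix n n ℂ) : ℝ :=
  - Real.logb 2 (sInf {t : ℝ | ∃ E : Matrix n n ℂ,
      IsTest E ∧ 1 - ε ≤ ((ρ * E).trace).re ∧ t = ((σ * E).trace).re})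

/-- Trace of the positive part of a Hermitian matrix: `Tr X₊ = (Tr X + ‖X‖₁)/2`. -/
noncomputable def posTrace {n : Type*} [Fintype n] [DecidableEq n] (X : Matrix n n ℂ) : ℝ :=
  ((X.trace).re + traceNorm X) / 2


section PSDSqrt
open scoped MatrixOrder

/-- Positive-semidefinite square root, as in the old Mathlib. -/
noncomputable def Matrix.PosSemidef.sqrt {n : Type*} [Fintype n] [DecidableEq n]
    {A : Matrix n n ℂ} (h : A.PosSemidef) : Matrix n n ℂ :=
  h.1.eigenvectorUnitary.1 * Matrix.diagonal (((↑) : ℝ → ℂ) ∘ (√·) ∘ h.1.eigenvalues) *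
      (star h.1.eigenvectorUnitary : Matrix n n ℂ)

lemma Matrix.PosSemidef.sqrt_eq_cfc {n : Type*} [Fintype n] [DecidableEq n]
    {A : Matrix n n ℂ} (h : A.PosSemidef) : h.sqrt = CFC.sqrt A := by
  rw [CFC.sqrt_eq_real_sqrt A (Matrix.nonneg_iff_posSemidef.mpr h), cfcₙ_eq_cfc,
    h.1.cfc_eq, Matrix.IsHermitian.cfc, Unitary.conjStarAlgAut_apply]
  rfl

lemma Matrix.PosSemidef.posSemidef_sqrt {n : Type*} [Fintype n] [DecidableEq n]
    {A : Matrix n n ℂ} (h : A.PosSemidef) : h.sqrt.PosSemidef := by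
  rw [h.sqrt_eq_cfc]
  exact Matrix.nonneg_iff_posSemidef.mp (CFC.sqrt_nonneg A)

lemma Matrix.PosSemidef.sqrt_mul_self {n : Type*} [Fintype n] [DecidableEq n]
    {A : Matrix n n ℂ} (h : A.PosSemidef) : h.sqrt * h.sqrt = A := by
  rw [h.sqrt_eq_cfc]
  exact CFC.sqrt_mul_sqrt_self A (Matrix.nonneg_iff_posSemidef.mpr h)

lemma Matrix.PosSemidef.sq_sqrt {n : Type*} [Fintype n] [DecidableEq n]
    {A : Matrix n n ℂ} (h : A.PosSemidef) : h.sqrt ^ 2 = A := by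
  rw [pow_two]; exact h.sqrt_mul_self

lemma Matrix.PosSemidef.eq_sqrt_of_sq_eq {n : Type*} [Fintype n] [DecidableEq n]
    {A : Matrix n n ℂ} (hA : A.PosSemidef) {B : Matrix n n ℂ} (hB : B.PosSemidef)
    (hAB : A ^ 2 = B) : A = hB.sqrt := by
  rw [hB.sqrt_eq_cfc]
  exact (CFC.sqrt_unique (by rw [← pow_two]; exact hAB)
    (Matrix.nonneg_iff_posSemidef.mpr hA)).symm

end PSDSqrt

section AQC
set_option linter.unusedSectionVars false
set_option maxHeartbeats 4000000
open Matrix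

variable {n : Type*} [Fintype n] [DecidableEq n]
variable {m : Type*} [Fintype m] [DecidableEq m]


variable {n : Type*} [Fintype n] [DecidableEq n]
variable {m : Type*} [Fintype m] [DecidableEq m]

lemma psd_diag_nonneg {M : Matrix n n ℂ} (h : M.PosSemidef) (i : n) : 0 ≤ M i i := by
  exact h.diag_nonneg

lemma psd_trace_nonneg {M : Matrix n n ℂ} (h : M.PosSemidef) : 0 ≤ M.trace := by
  rw [Matrix.trace]
  exact Finset.sum_nonneg fun i _ => psd_diag_nonneg h i

lemma psd_trace_eq_re {M : Matrix n n ℂ} (h : M.PosSemidef) :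
    M.trace = ((M.trace.re : ℝ) : ℂ) := by
  have h0 := psd_trace_nonneg h
  rw [Complex.le_def] at h0
  exact Complex.ext rfl (by simpa using h0.2.symm)

lemma psd_trace_re_nonneg {M : Matrix n n ℂ} (h : M.PosSemidef) : 0 ≤ M.trace.re := by
  have h0 := psd_trace_nonneg h
  rw [Complex.le_def] at h0
  simpa using h0.1

lemma psd_smul_real {M : Matrix n n ℂ} (h : M.PosSemidef) {r : ℝ} (hr : 0 ≤ r) :
    ((r : ℂ) • M).PosSemidef := by
  have hr' : (0:ℂ) ≤ (r:ℂ) := by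
    rw [Complex.le_def]; simp [hr]
  exact h.smul hr'

lemma psd_sum {ι : Type*} (s : Finset ι) (f : ι → Matrix n n ℂ)
    (h : ∀ i ∈ s, (f i).PosSemidef) : (∑ i ∈ s, f i).PosSemidef := by
  classical
  induction s using Finset.induction_on with
  | empty => simpa using Matrix.PosSemidef.zero
  | @insert a s' hx ih =>
    rw [Finset.sum_insert hx]
    exact Matrix.PosSemidef.add (h a (Finset.mem_insert_self a s'))
      (ih fun i hi => h i (Finset.mem_insert_of_mem hi))

/-- Cauchy-Schwarz for complex sums. -/
lemma cs_complex {ι : Type*} [Fintype ι] (a b : ι → ℂ) :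
    ‖∑ i, (starRingEnd ℂ) (a i) * b i‖ ^ 2 ≤ (∑ i, ‖a i‖ ^ 2) * (∑ i, ‖b i‖ ^ 2) := by
  let va : EuclideanSpace ℂ ι := WithLp.toLp 2 a
  let vb : EuclideanSpace ℂ ι := WithLp.toLp 2 b
  have h1 : (inner ℂ va vb : ℂ) = ∑ i, (starRingEnd ℂ) (a i) * b i := by
    rw [PiLp.inner_apply]
    exact Finset.sum_congr rfl fun i _ => by simp [va, vb, mul_comm]
  have h2 := norm_inner_le_norm (𝕜 := ℂ) va vb
  rw [h1] at h2
  have h3 : ‖va‖ = Real.sqrt (∑ i, ‖a i‖ ^ 2) := EuclideanSpace.norm_eq va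
  have h4 : ‖vb‖ = Real.sqrt (∑ i, ‖b i‖ ^ 2) := EuclideanSpace.norm_eq vb
  calc ‖∑ i, (starRingEnd ℂ) (a i) * b i‖ ^ 2 ≤ (‖va‖ * ‖vb‖) ^ 2 := by
        apply pow_le_pow_left₀ (norm_nonneg _) h2
    _ = (∑ i, ‖a i‖ ^ 2) * (∑ i, ‖b i‖ ^ 2) := by
        rw [h3, h4, mul_pow, Real.sq_sqrt (by positivity), Real.sq_sqrt (by positivity)]




variable {n : Type*} [Fintype n] [DecidableEq n]

lemma sqrt_congr {A B : Matrix n n ℂ} (hA : A.PosSemidef) (hB : B.PosSemidef)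
    (h : A = B) : hA.sqrt = hB.sqrt := by subst h; rfl

lemma sqrt_smul {M : Matrix n n ℂ} (hM : M.PosSemidef) {r : ℝ} (hr : 0 ≤ r)
    (h2 : (((r^2 : ℝ) : ℂ) • M).PosSemidef) :
    h2.sqrt = ((r : ℝ) : ℂ) • hM.sqrt := by
  symm
  apply Matrix.PosSemidef.eq_sqrt_of_sq_eq
  · exact psd_smul_real hM.posSemidef_sqrt hr
  · have : (((r : ℝ) : ℂ) • hM.sqrt) ^ 2 = ((r^2 : ℝ) : ℂ) • (hM.sqrt ^ 2) := by
      rw [smul_pow]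
      push_cast
      ring_nf
    rw [this, hM.sq_sqrt]

lemma sqrt_sq' {H : Matrix n n ℂ} (hH : H.PosSemidef) (h2 : (H * H).PosSemidef) :
    h2.sqrt = H := by
  symm
  exact hH.eq_sqrt_of_sq_eq h2 (by rw [pow_two])




variable {n : Type*} [Fintype n] [DecidableEq n]

lemma polar_square (K : Matrix n n ℂ) :
    ∃ U : Matrix n n ℂ, U * Uᴴ = 1 ∧ Uᴴ * U = 1 ∧
      K = (Matrix.posSemidef_self_mul_conjTranspose K).sqrt * U := by
  have hP : (K * Kᴴ).PosSemidef := Matrix.posSemidef_self_mul_conjTranspose K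
  set hH : (K * Kᴴ).IsHermitian := hP.1 with hHdef
  set e : n → ℝ := hH.eigenvalues with he_def
  set V : Matrix n n ℂ := (hH.eigenvectorUnitary : Matrix n n ℂ) with hV_def
  have hV1 : star V * V = 1 := by simp [hV_def]
  have hV2 : V * star V = 1 := by simp [hV_def]
  have hdiag : star V * (K * Kᴴ) * V = diagonal (RCLike.ofReal ∘ e) := by
    have := hH.conjStarAlgAut_star_eigenvectorUnitary
    simpa [Unitary.conjStarAlgAut_apply, hV_def] using this
  have hcoe : (RCLike.ofReal ∘ e : n → ℂ) = fun i => ((e i : ℝ) : ℂ) := rfl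
  have he : ∀ i, 0 ≤ e i := hP.eigenvalues_nonneg
  set K' : Matrix n n ℂ := star V * K with hK'_def
  have hK'K' : K' * K'ᴴ = diagonal (fun i => ((e i : ℝ) : ℂ)) := by
    have : K' * K'ᴴ = star V * (K * Kᴴ) * V := by
      rw [hK'_def, Matrix.conjTranspose_mul, Matrix.star_eq_conjTranspose,
        Matrix.conjTranspose_conjTranspose]
      noncomm_ring
    rw [this, hdiag, hcoe]
  have hrow0 : ∀ i, e i = 0 → ∀ j, K' i j = 0 := by
    intro i hei j
    have hsum : ∑ k, Complex.normSq (K' i k) = 0 := by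
      have h1 : (K' * K'ᴴ) i i = ((e i : ℝ) : ℂ) := by rw [hK'K']; simp
      have h2 : (K' * K'ᴴ) i i = ∑ k, K' i k * (starRingEnd ℂ) (K' i k) := by
        simp [Matrix.mul_apply, Matrix.conjTranspose_apply]
      rw [h2] at h1
      have h3 : ∑ k, K' i k * (starRingEnd ℂ) (K' i k)
          = ((∑ k, Complex.normSq (K' i k) : ℝ) : ℂ) := by
        push_cast
        congr 1
        funext k
        rw [Complex.mul_conj]
      rw [h3, hei] at h1
      exact_mod_cast h1
    have := (Finset.sum_eq_zero_iff_of_nonneg (fun k _ => Complex.normSq_nonneg _)).mp hsum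
    exact Complex.normSq_eq_zero.mp (this j (Finset.mem_univ j))
  set u : n → EuclideanSpace ℂ n :=
    fun i => WithLp.toLp 2 (fun j => (((Real.sqrt (e i))⁻¹ : ℝ) : ℂ) * K' i j) with hu_def
  have hinner : ∀ i k, (inner ℂ (u i) (u k) : ℂ)
      = (((Real.sqrt (e i))⁻¹ : ℝ) : ℂ) * (((Real.sqrt (e k))⁻¹ : ℝ) : ℂ)
        * (if k = i then ((e i : ℝ) : ℂ) else 0) := by
    intro i k
    rw [PiLp.inner_apply]
    have step : ∀ j, (inner ℂ (u i j) (u k j) : ℂ)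
        = (((Real.sqrt (e i))⁻¹ : ℝ) : ℂ) * (((Real.sqrt (e k))⁻¹ : ℝ) : ℂ)
          * ((starRingEnd ℂ) (K' i j) * K' k j) := by
      intro j
      simp only [hu_def, PiLp.toLp_apply, RCLike.inner_apply, _root_.map_mul, Complex.conj_ofReal]
      ring
    rw [Finset.sum_congr rfl (fun j _ => step j), ← Finset.mul_sum]
    congr 1
    have h4 : ∑ j, (starRingEnd ℂ) (K' i j) * K' k j = (K' * K'ᴴ) k i := by
      simp only [Matrix.mul_apply, Matrix.conjTranspose_apply]
      exact Finset.sum_congr rfl fun j _ => mul_comm _ _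
    rw [h4, hK'K']
    simp only [Matrix.diagonal_apply]
    split_ifs with h
    · rw [h]
    · rfl
  have hON : Orthonormal ℂ (Set.restrict {i | e i ≠ 0} u) := by
    rw [orthonormal_iff_ite]
    rintro ⟨i, hi⟩ ⟨k, hk⟩
    show inner ℂ (u i) (u k) = _
    rw [hinner]
    rcases Classical.em (i = k) with hik | hik
    · subst hik
      rw [if_pos rfl, if_pos rfl]
      rw [← Complex.ofReal_mul]
      rw [show ((e i : ℝ) : ℂ) = (((e i : ℝ) : ℝ) : ℂ) from rfl, ← Complex.ofReal_mul]
      norm_cast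
      rw [← mul_inv, Real.mul_self_sqrt (he i)]
      exact inv_mul_cancel₀ hi
    · rw [if_neg (fun h => hik h.symm), mul_zero,
        if_neg (fun h => hik (Subtype.ext_iff.mp h))]
  obtain ⟨b, hb⟩ := hON.exists_orthonormalBasis_extension_of_card_eq
    (finrank_euclideanSpace (𝕜 := ℂ) (ι := n))
  set W : Matrix n n ℂ := Matrix.of (fun i j => b i j) with hW_def
  have hWW : W * Wᴴ = 1 := by
    ext i k
    have h5 : (W * Wᴴ) i k = ∑ j, W i j * (starRingEnd ℂ) (W k j) := by
      simp [Matrix.mul_apply, Matrix.conjTranspose_apply]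
    have h6 : (inner ℂ (b k) (b i) : ℂ) = ∑ j, (starRingEnd ℂ) (b k j) * (b i j) := by
      rw [PiLp.inner_apply]
      exact Finset.sum_congr rfl fun j _ => by simp [mul_comm]
    have h7 := (orthonormal_iff_ite.mp b.orthonormal) k i
    rw [h5, Matrix.one_apply]
    have : ∑ j, W i j * (starRingEnd ℂ) (W k j) = (inner ℂ (b k) (b i) : ℂ) := by
      rw [h6]
      exact Finset.sum_congr rfl fun j _ => (mul_comm _ _)
    rw [this, h7]
    split_ifs with h1 h2 h2
    · rfl
    · exact absurd h1.symm h2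
    · exact absurd h2.symm h1
    · rfl
  have hWW' : Wᴴ * W = 1 := mul_eq_one_comm.mp hWW
  have hK'W : K' = diagonal (fun i => ((Real.sqrt (e i) : ℝ) : ℂ)) * W := by
    ext i j
    rw [Matrix.diagonal_mul]
    rcases Classical.em (e i = 0) with h0 | h0
    · rw [hrow0 i h0 j, h0]
      simp
    · have : W i j = u i j := by
        rw [hW_def]
        show (b i) j = u i j
        rw [hb i h0]
      rw [this, hu_def]
      show K' i j = ((Real.sqrt (e i) : ℝ) : ℂ) * ((((Real.sqrt (e i))⁻¹ : ℝ) : ℂ) * K' i j)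
      rw [← mul_assoc, ← Complex.ofReal_mul,
        mul_inv_cancel₀ (Real.sqrt_ne_zero'.mpr (lt_of_le_of_ne (he i) (Ne.symm h0))), Complex.ofReal_one, one_mul]
  have hsqrt : hP.sqrt = V * diagonal (fun i => ((Real.sqrt (e i) : ℝ) : ℂ)) * star V := by
    symm
    apply Matrix.PosSemidef.eq_sqrt_of_sq_eq
    · rw [Matrix.star_eq_conjTranspose]
      exact (Matrix.PosSemidef.diagonal (fun i => by
        rw [Complex.le_def]; simp [Real.sqrt_nonneg])).mul_mul_conjTranspose_same V
    · have hD2 : (diagonal (fun i => ((Real.sqrt (e i) : ℝ) : ℂ))) ^ 2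
          = diagonal (fun i => ((e i : ℝ) : ℂ)) := by
        rw [pow_two, Matrix.diagonal_mul_diagonal]
        have hfun : (fun i => ((Real.sqrt (e i) : ℝ) : ℂ) * ((Real.sqrt (e i) : ℝ) : ℂ))
            = fun i => ((e i : ℝ) : ℂ) := by
          funext i
          rw [← Complex.ofReal_mul, Real.mul_self_sqrt (he i)]
        rw [hfun]
      calc (V * diagonal (fun i => ((Real.sqrt (e i) : ℝ) : ℂ)) * star V) ^ 2
          = V * ((diagonal (fun i => ((Real.sqrt (e i) : ℝ) : ℂ))) ^ 2) * star V := by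
            rw [pow_two, pow_two]
            rw [show ∀ A B C : Matrix n n ℂ, V * A * star V * (V * B * C) = V * (A * (star V * V) * B) * C from fun A B C => by noncomm_ring]
            rw [hV1]
            noncomm_ring
        _ = K * Kᴴ := by
            rw [hD2, ← hcoe, ← hdiag]
            calc V * (star V * (K * Kᴴ) * V) * star V
                = (V * star V) * (K * Kᴴ) * (V * star V) := by noncomm_ring
              _ = K * Kᴴ := by rw [hV2]; noncomm_ring
  have hVc1 : Vᴴ * V = 1 := by rw [← Matrix.star_eq_conjTranspose]; exact hV1
  have hVc2 : V * Vᴴ = 1 := by rw [← Matrix.star_eq_conjTranspose]; exact hV2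
  have hUU : (V * W) * (V * W)ᴴ = 1 := by
    rw [Matrix.conjTranspose_mul]
    calc V * W * (Wᴴ * Vᴴ) = V * (W * Wᴴ) * Vᴴ := by noncomm_ring
      _ = 1 := by rw [hWW, mul_one, hVc2]
  refine ⟨V * W, hUU, mul_eq_one_comm.mp hUU, ?_⟩
  show K = hP.sqrt * (V * W)
  rw [hsqrt]
  calc K = (V * star V) * K := by rw [hV2, one_mul]
    _ = V * K' := by rw [hK'_def]; noncomm_ring
    _ = V * (diagonal (fun i => ((Real.sqrt (e i) : ℝ) : ℂ)) * W) := by rw [← hK'W]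
    _ = V * diagonal (fun i => ((Real.sqrt (e i) : ℝ) : ℂ)) * star V * (V * W) := by
        rw [show ∀ D : Matrix n n ℂ, V * D * star V * (V * W) = V * (D * ((star V * V) * W)) from fun D => by noncomm_ring, hV1]
        noncomm_ring



variable {n : Type*} [Fintype n] [DecidableEq n]
variable {m : Type*} [Fintype m] [DecidableEq m]



lemma polar_rect (M : Matrix n m ℂ) (E : Matrix n m ℂ) (hE : E * Eᴴ = 1) :
    ∃ W : Matrix n m ℂ, W * Wᴴ = 1 ∧
      M = (Matrix.posSemidef_self_mul_conjTranspose M).sqrt * W := by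
  set Mt : Matrix m m ℂ := Eᴴ * M with hMt_def
  have hEM : E * Mt = M := by rw [hMt_def, ← Matrix.mul_assoc, hE, Matrix.one_mul]
  set H : Matrix n n ℂ := (Matrix.posSemidef_self_mul_conjTranspose M).sqrt with hH_def
  have hHpsd : H.PosSemidef := (Matrix.posSemidef_self_mul_conjTranspose M).posSemidef_sqrt
  have hH2 : H * H = M * Mᴴ := (Matrix.posSemidef_self_mul_conjTranspose M).sqrt_mul_self
  obtain ⟨U, hU1, hU2, hKU⟩ := polar_square Mt
  have hStilde : (Matrix.posSemidef_self_mul_conjTranspose Mt).sqrt = Eᴴ * H * E := by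
    symm
    apply Matrix.PosSemidef.eq_sqrt_of_sq_eq
    · exact hHpsd.conjTranspose_mul_mul_same E
    · rw [pow_two]
      calc (Eᴴ * H * E) * (Eᴴ * H * E) = Eᴴ * (H * ((E * Eᴴ) * (H * E))) := by
            simp only [Matrix.mul_assoc]
        _ = Eᴴ * ((H * H) * E) := by
            rw [hE, Matrix.one_mul]; simp only [Matrix.mul_assoc]
        _ = Eᴴ * ((M * Mᴴ) * E) := by rw [hH2]
        _ = Mt * Mtᴴ := by
            rw [hMt_def, Matrix.conjTranspose_mul, Matrix.conjTranspose_conjTranspose]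
            simp only [Matrix.mul_assoc]
  refine ⟨E * U, ?_, ?_⟩
  · rw [Matrix.conjTranspose_mul]
    calc E * U * (Uᴴ * Eᴴ) = E * ((U * Uᴴ) * Eᴴ) := by simp only [Matrix.mul_assoc]
      _ = 1 := by rw [hU1, Matrix.one_mul, hE]
  · calc M = E * Mt := hEM.symm
      _ = E * (Eᴴ * (H * (E * U))) := by rw [hKU, hStilde]; simp only [Matrix.mul_assoc]
      _ = (E * Eᴴ) * (H * (E * U)) := by simp only [Matrix.mul_assoc]
      _ = H * (E * U) := by rw [hE, Matrix.one_mul]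

lemma exists_coisometry (x₀ : m) :
    ∃ E : Matrix n (m × n) ℂ, E * Eᴴ = 1 := by
  refine ⟨Matrix.of (fun i p => if p.1 = x₀ ∧ p.2 = i then 1 else 0), ?_⟩
  ext i k
  simp only [Matrix.mul_apply, Matrix.conjTranspose_apply, Matrix.of_apply, Matrix.one_apply]
  rw [Fintype.sum_prod_type]
  have key : ∀ x : m, ∑ j : n, (if x = x₀ ∧ j = i then (1:ℂ) else 0) *
      star (if x = x₀ ∧ j = k then (1:ℂ) else 0)
      = if x = x₀ then (if i = k then 1 else 0) else 0 := by
    intro x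
    by_cases hx : x = x₀
    · subst hx
      simp only [true_and, if_pos rfl]
      by_cases hik : i = k
      · subst hik
        simp [Finset.sum_ite_eq']
      · rw [if_neg hik]
        apply Finset.sum_eq_zero
        intro j _
        rcases Classical.em (j = k) with hj | hj
        · subst hj
          rw [if_neg (fun hji : j = i => hik (hji.symm ▸ rfl))]
          simp
        · rw [if_neg hj]
          simp
    · simp [hx]
  rw [Finset.sum_congr rfl (fun x _ => key x)]
  simp [Finset.sum_ite_eq']


lemma trace_conjTranspose_mul (X Y : Matrix m n ℂ) :
    (Xᴴ * Y).trace = ∑ p : m × n, (starRingEnd ℂ) (X p.1 p.2) * Y p.1 p.2 := by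
  rw [Fintype.sum_prod_type, Finset.sum_comm]
  rw [Matrix.trace]
  simp only [Matrix.diag_apply, Matrix.mul_apply, Matrix.conjTranspose_apply]
  rfl

lemma sum_normsq_eq_trace (X : Matrix m n ℂ) :
    (Xᴴ * X).trace = (((∑ p : m × n, ‖X p.1 p.2‖^2 : ℝ)) : ℂ) := by
  rw [trace_conjTranspose_mul]
  push_cast
  apply Finset.sum_congr rfl
  intro p _
  rw [mul_comm, Complex.mul_conj']

lemma traceNorm_nonneg' (A : Matrix n n ℂ) : 0 ≤ traceNorm A :=
  psd_trace_re_nonneg (Matrix.posSemidef_conjTranspose_mul_self A).posSemidef_sqrt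

lemma traceNorm_alt (K : Matrix n n ℂ) :
    traceNorm K = ((Matrix.posSemidef_self_mul_conjTranspose K).sqrt.trace).re := by
  obtain ⟨U, hU1, hU2, hpolar⟩ := polar_square K
  set H : Matrix n n ℂ := (Matrix.posSemidef_self_mul_conjTranspose K).sqrt with hH
  have hHpsd : H.PosSemidef := (Matrix.posSemidef_self_mul_conjTranspose K).posSemidef_sqrt
  have hHH : H * H = K * Kᴴ := (Matrix.posSemidef_self_mul_conjTranspose K).sqrt_mul_self
  have hsq : (Uᴴ * H * U) ^ 2 = Kᴴ * K := by
    rw [pow_two]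
    calc (Uᴴ * H * U) * (Uᴴ * H * U) = Uᴴ * (H * ((U * Uᴴ) * (H * U))) := by
          simp only [Matrix.mul_assoc]
      _ = Uᴴ * ((H * H) * U) := by rw [hU1, Matrix.one_mul]; simp only [Matrix.mul_assoc]
      _ = Kᴴ * K := by
          conv_rhs => rw [hpolar, Matrix.conjTranspose_mul, hHpsd.1.eq]
          simp only [Matrix.mul_assoc]
  have hUHU : Uᴴ * H * U = (Matrix.posSemidef_conjTranspose_mul_self K).sqrt :=
    Matrix.PosSemidef.eq_sqrt_of_sq_eq (hHpsd.conjTranspose_mul_mul_same U) _ hsq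
  have htr : (Uᴴ * H * U).trace = H.trace := by
    rw [Matrix.mul_assoc, Matrix.trace_mul_comm, Matrix.mul_assoc, hU1, Matrix.mul_one]
  show ((Matrix.posSemidef_conjTranspose_mul_self K).sqrt.trace).re = _
  rw [← hUHU, htr]

lemma traceNorm_conjTranspose (K : Matrix n n ℂ) : traceNorm Kᴴ = traceNorm K := by
  rw [traceNorm_alt Kᴴ]
  show ((Matrix.posSemidef_self_mul_conjTranspose Kᴴ).sqrt.trace).re
    = ((Matrix.posSemidef_conjTranspose_mul_self K).sqrt.trace).re
  rw [sqrt_congr (Matrix.posSemidef_self_mul_conjTranspose Kᴴ)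
    (Matrix.posSemidef_conjTranspose_mul_self K) (by rw [Matrix.conjTranspose_conjTranspose])]

lemma norm_trace_le_traceNorm (K : Matrix n n ℂ) : ‖K.trace‖ ≤ traceNorm K := by
  obtain ⟨U, hU1, hU2, hpolar⟩ := polar_square K
  set H : Matrix n n ℂ := (Matrix.posSemidef_self_mul_conjTranspose K).sqrt with hH
  have hHpsd : H.PosSemidef := (Matrix.posSemidef_self_mul_conjTranspose K).posSemidef_sqrt
  set G : Matrix n n ℂ := hHpsd.sqrt with hG
  have hGpsd : G.PosSemidef := hHpsd.posSemidef_sqrt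
  have hGG : G * G = H := hHpsd.sqrt_mul_self
  have htrK : K.trace = (Gᴴ * (G * U)).trace := by
    rw [hGpsd.1.eq, ← Matrix.mul_assoc, hGG, ← hpolar]
  have hcs := cs_complex (fun p : n × n => G p.1 p.2) (fun p : n × n => (G * U) p.1 p.2)
  rw [← trace_conjTranspose_mul] at hcs
  have h1 : (∑ p : n × n, ‖G p.1 p.2‖ ^ 2) = H.trace.re := by
    have := sum_normsq_eq_trace G
    rw [hGpsd.1.eq, hGG] at this
    rw [this, Complex.ofReal_re]
  have h2 : (∑ p : n × n, ‖(G * U) p.1 p.2‖ ^ 2) = H.trace.re := by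
    have := sum_normsq_eq_trace (G * U)
    have e1 : (G * U)ᴴ * (G * U) = Uᴴ * H * U := by
      rw [Matrix.conjTranspose_mul, hGpsd.1.eq]
      calc Uᴴ * G * (G * U) = Uᴴ * ((G * G) * U) := by simp only [Matrix.mul_assoc]
        _ = Uᴴ * H * U := by rw [hGG]; simp only [Matrix.mul_assoc]
    have e2 : (Uᴴ * H * U).trace = H.trace := by
      rw [Matrix.mul_assoc, Matrix.trace_mul_comm, Matrix.mul_assoc, hU1, Matrix.mul_one]
    rw [e1, e2] at this
    rw [this, Complex.ofReal_re]
  rw [h1, h2] at hcs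
  rw [traceNorm_alt, htrK]
  have hHre : 0 ≤ H.trace.re := psd_trace_re_nonneg hHpsd
  nlinarith [norm_nonneg ((Gᴴ * (G * U)).trace), hcs]

lemma psqrt_eq {ρ : Matrix n n ℂ} (h : ρ.PosSemidef) : psqrt ρ = h.sqrt := dif_pos h

lemma traceNorm_smul_real (M : Matrix n n ℂ) {r : ℝ} (hr : 0 ≤ r) :
    traceNorm (((r : ℝ) : ℂ) • M) = r * traceNorm M := by
  have h1 : (((r : ℝ) : ℂ) • M)ᴴ * (((r : ℝ) : ℂ) • M) = ((r^2 : ℝ) : ℂ) • (Mᴴ * M) := by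
    rw [Matrix.conjTranspose_smul]
    rw [Matrix.smul_mul, Matrix.mul_smul, smul_smul]
    congr 1
    rw [Complex.star_def, Complex.conj_ofReal, ← Complex.ofReal_mul, pow_two]
  have hMM : (Mᴴ * M).PosSemidef := Matrix.posSemidef_conjTranspose_mul_self M
  have h2 : (((r^2 : ℝ) : ℂ) • (Mᴴ * M)).PosSemidef := psd_smul_real hMM (by positivity)
  show ((Matrix.posSemidef_conjTranspose_mul_self _).sqrt.trace).re
    = r * ((Matrix.posSemidef_conjTranspose_mul_self M).sqrt.trace).re
  rw [sqrt_congr (Matrix.posSemidef_conjTranspose_mul_self (((r : ℝ) : ℂ) • M)) h2 h1]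
  rw [sqrt_smul hMM hr h2]
  rw [Matrix.trace_smul]
  simp [Complex.smul_re]

/-- Key fidelity lower bound: `|Tr(√ρ B)| ≤ √q · F(ρ, q⁻¹ B Bᴴ)`. -/
lemma fidelity_ge_of_factor {ρ : Matrix n n ℂ} (hρ : ρ.PosSemidef) (B : Matrix n n ℂ)
    {q : ℝ} (hq : 0 < q) :
    ‖(hρ.sqrt * B).trace‖
      ≤ Real.sqrt q * fidelity ρ (((q⁻¹ : ℝ) : ℂ) • (B * Bᴴ)) := by
  set R : Matrix n n ℂ := hρ.sqrt with hR
  have hBB : (B * Bᴴ).PosSemidef := Matrix.posSemidef_self_mul_conjTranspose B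
  set G : Matrix n n ℂ := hBB.sqrt with hG
  have hGpsd : G.PosSemidef := hBB.posSemidef_sqrt
  have hω : (((q⁻¹ : ℝ) : ℂ) • (B * Bᴴ)).PosSemidef :=
    psd_smul_real hBB (inv_nonneg.mpr hq.le)
  -- sqrt of ω
  have hr2 : ((Real.sqrt q⁻¹)^2 : ℝ) = q⁻¹ := Real.sq_sqrt (inv_nonneg.mpr hq.le)
  have hsm : ((((Real.sqrt q⁻¹)^2 : ℝ) : ℂ) • (B * Bᴴ)).PosSemidef := by
    rw [hr2]; exact hω
  have hsqrtω : hω.sqrt = ((Real.sqrt q⁻¹ : ℝ) : ℂ) • G := by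
    rw [← sqrt_smul hBB (Real.sqrt_nonneg _) hsm]
    exact sqrt_congr _ _ (by rw [hr2])
  -- fidelity computation
  have hfid : fidelity ρ (((q⁻¹ : ℝ) : ℂ) • (B * Bᴴ))
      = Real.sqrt q⁻¹ * traceNorm (R * G) := by
    rw [fidelity, psqrt_eq hρ, psqrt_eq hω, hsqrtω, Matrix.mul_smul]
    exact traceNorm_smul_real _ (Real.sqrt_nonneg _)
  -- traceNorm (R * G) = traceNorm (R * B)
  have hRG : (R * G) * (R * G)ᴴ = (R * B) * (R * B)ᴴ := by
    rw [Matrix.conjTranspose_mul, Matrix.conjTranspose_mul, hGpsd.1.eq]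
    calc R * G * (G * Rᴴ) = R * ((G * G) * Rᴴ) := by simp only [Matrix.mul_assoc]
      _ = R * (B * (Bᴴ * Rᴴ)) := by rw [hBB.sqrt_mul_self]; simp only [Matrix.mul_assoc]
      _ = R * B * (Bᴴ * Rᴴ) := by simp only [Matrix.mul_assoc]
  have htn : traceNorm (R * G) = traceNorm (R * B) := by
    rw [traceNorm_alt, traceNorm_alt]
    rw [sqrt_congr (Matrix.posSemidef_self_mul_conjTranspose (R * G))
      (Matrix.posSemidef_self_mul_conjTranspose (R * B)) hRG]
  have hbound := norm_trace_le_traceNorm (R * B)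
  rw [hfid, htn]
  rw [Real.sqrt_inv, ← mul_assoc, mul_inv_cancel₀ (by positivity), one_mul]
  exact hbound

lemma ereal_le_sInf_add {a : EReal} {S : Set EReal} {L : ℝ}
    (h : ∀ s ∈ S, a ≤ s + (L : EReal)) : a ≤ sInf S + (L : EReal) := by
  have key : ∀ s ∈ S, a + ((-L : ℝ) : EReal) ≤ s := by
    intro s hs
    calc a + ((-L : ℝ) : EReal) ≤ (s + (L : EReal)) + ((-L : ℝ) : EReal) :=
          add_le_add_left (h s hs) _
      _ = s + ((L : EReal) + ((-L : ℝ) : EReal)) := add_assoc _ _ _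
      _ = s := by
          rw [← EReal.coe_add, add_neg_cancel]
          simp
  have hlb : a + ((-L : ℝ) : EReal) ≤ sInf S := le_sInf key
  calc a = a + (((-L : ℝ) : EReal) + (L : EReal)) := by
        rw [← EReal.coe_add, neg_add_cancel]; simp
    _ = (a + ((-L : ℝ) : EReal)) + (L : EReal) := (add_assoc _ _ _).symm
    _ ≤ sInf S + (L : EReal) := add_le_add_left hlb _

lemma trace_re_mono {A B : Matrix n n ℂ} (h : loewnerLE A B) :
    A.trace.re ≤ B.trace.re := by
  have := psd_trace_re_nonneg h
  rw [Matrix.trace_sub, Complex.sub_re] at this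
  linarith

/-- The pigeonhole / Cauchy-Schwarz selection lemma. -/
lemma exists_good_index {X : Type*} [Fintype X] [Nonempty X]
    (p q : X → ℝ) (c : X → ℂ) (F t κ : ℝ)
    (hp : ∀ x, 0 ≤ p x) (hq : ∀ x, 0 ≤ q x) (hq1 : ∑ x, q x = 1) (hp1 : ∑ x, p x = 1)
    (hcs : ∀ x, ‖c x‖ ^ 2 ≤ p x * q x)
    (hF0 : 0 ≤ F) (hFc : F ≤ ∑ x, ‖c x‖)
    (ht : 0 ≤ t) (hκ : 0 < κ)
    (hsum : t + κ * (Fintype.card X : ℝ) ≤ F ^ 2) :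
    ∃ x, κ ≤ q x ∧ t * (p x * q x) ≤ ‖c x‖ ^ 2 ∧ 0 < p x ∧ 0 < q x := by
  by_contra hcon
  push_neg at hcon
  set r : X → ℝ := fun x => if 0 < p x then ‖c x‖ ^ 2 / p x else 0 with hr_def
  have hr0 : ∀ x, 0 ≤ r x := by
    intro x
    simp only [hr_def]
    split_ifs with h
    · positivity
    · exact le_refl 0
  have hcr : ∀ x, ‖c x‖ = Real.sqrt (p x) * Real.sqrt (r x) := by
    intro x
    simp only [hr_def]
    split_ifs with h
    · rw [← Real.sqrt_mul (hp x), mul_div_cancel₀ _ (ne_of_gt h), Real.sqrt_sq (norm_nonneg _)]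
    · have hp0 : p x = 0 := le_antisymm (not_lt.mp h) (hp x)
      have : ‖c x‖ ^ 2 ≤ 0 := by
        have := hcs x
        rw [hp0, zero_mul] at this
        exact this
      have hc0 : ‖c x‖ = 0 := by nlinarith [norm_nonneg (c x)]
      rw [hc0, hp0]
      simp
  have hCS : (∑ x, ‖c x‖) ^ 2 ≤ (∑ x, p x) * (∑ x, r x) := by
    have := Finset.sum_mul_sq_le_sq_mul_sq Finset.univ
      (fun x => Real.sqrt (p x)) (fun x => Real.sqrt (r x))
    calc (∑ x, ‖c x‖) ^ 2
        = (∑ x, Real.sqrt (p x) * Real.sqrt (r x)) ^ 2 := by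
          congr 1
          exact Finset.sum_congr rfl fun x _ => hcr x
      _ ≤ (∑ x, Real.sqrt (p x) ^ 2) * (∑ x, Real.sqrt (r x) ^ 2) := this
      _ = (∑ x, p x) * (∑ x, r x) := by
          congr 1
          · exact Finset.sum_congr rfl fun x _ => Real.sq_sqrt (hp x)
          · exact Finset.sum_congr rfl fun x _ => Real.sq_sqrt (hr0 x)
  have key : ∀ x, r x < κ + t * q x := by
    intro x
    rcases lt_or_ge (q x) κ with hqx | hqx
    · have hrq : r x ≤ q x := by
        simp only [hr_def]
        split_ifs with h
        · rw [div_le_iff₀ h]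
          calc ‖c x‖ ^ 2 ≤ p x * q x := hcs x
            _ = q x * p x := mul_comm _ _
        · exact hq x
      calc r x ≤ q x := hrq
        _ < κ := hqx
        _ ≤ κ + t * q x := le_add_of_nonneg_right (mul_nonneg ht (hq x))
    · have hqpos : 0 < q x := lt_of_lt_of_le hκ hqx
      rcases lt_or_ge 0 (p x) with hppos | hpz
      · have hlt : ‖c x‖ ^ 2 < t * (p x * q x) := by
          by_contra hge
          push_neg at hge
          exact absurd hqpos (not_lt.mpr (hcon x hqx hge hppos))
        have : r x < t * q x := by
          simp only [hr_def]
          rw [if_pos hppos, div_lt_iff₀ hppos]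
          calc ‖c x‖ ^ 2 < t * (p x * q x) := hlt
            _ = t * q x * p x := by ring
        linarith
      · have : r x = 0 := by
          simp only [hr_def]
          rw [if_neg (not_lt.mpr hpz)]
        rw [this]
        positivity
  have hsumlt : ∑ x, r x < κ * (Fintype.card X : ℝ) + t := by
    calc ∑ x, r x < ∑ x, (κ + t * q x) :=
          Finset.sum_lt_sum_of_nonempty Finset.univ_nonempty (fun x _ => key x)
      _ = κ * (Fintype.card X : ℝ) + t := by
          rw [Finset.sum_add_distrib, ← Finset.mul_sum, hq1]
          simp [Finset.sum_const, mul_comm]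
  have hF2 : F ^ 2 ≤ ∑ x, r x := by
    calc F ^ 2 ≤ (∑ x, ‖c x‖) ^ 2 := by
          apply pow_le_pow_left₀ hF0 hFc
      _ ≤ (∑ x, p x) * (∑ x, r x) := hCS
      _ = ∑ x, r x := by rw [hp1, one_mul]
  linarith

lemma block_sum {X : Type*} [Fintype X] [DecidableEq X] (B : Matrix n (X × n) ℂ) :
    ∑ x : X, (Matrix.of (fun i j => B i (x, j)) * (Matrix.of (fun i j => B i (x, j)))ᴴ)
      = B * Bᴴ := by
  ext i k
  rw [Matrix.sum_apply]
  simp only [Matrix.mul_apply, Matrix.conjTranspose_apply, Matrix.of_apply]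
  rw [Fintype.sum_prod_type]

lemma construction {d : ℕ} {X : Type*} [Fintype X] [Nonempty X]
    (p : X → ℝ) (hp : ∀ x, 0 ≤ p x) (hp1 : ∑ x, p x = 1)
    (ρ : X → Matrix (Fin d) (Fin d) ℂ) (hρ : ∀ x, IsDensity (ρ x))
    (σ : Matrix (Fin d) (Fin d) ℂ) (hσ : IsDensity σ)
    (ε μ : ℝ) (hε0 : 0 < ε) (hμ0 : 0 < μ) (hεμ : ε + μ ≤ 1)
    (ω : Matrix (Fin d) (Fin d) ℂ) (hω : IsDensity ω)
    (hdist : purifiedDist (∑ x, p x • ρ x) ω ≤ ε)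
    (l : ℝ) (hl : 0 ≤ l) (hlω : loewnerLE ω ((l : ℂ) • σ)) :
    ∃ (x : X) (ω' : Matrix (Fin d) (Fin d) ℂ), IsDensity ω' ∧
      purifiedDist (ρ x) ω' ≤ ε + μ ∧
      loewnerLE ω' (((l * ((Fintype.card X : ℝ) / ((ε+μ)^2 - ε^2)) : ℝ) : ℂ) • σ) := by
  classical
  set ρbar : Matrix (Fin d) (Fin d) ℂ := ∑ x, p x • ρ x with hρbar_def
  have hsmul_eq : ∀ x : X, p x • ρ x = ((p x : ℝ) : ℂ) • ρ x := by
    intro x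
    ext i j
    simp [Complex.real_smul]
  have hρbar : ρbar.PosSemidef := by
    rw [hρbar_def]
    apply psd_sum
    intro x _
    rw [hsmul_eq x]
    exact psd_smul_real (hρ x).1 (hp x)
  set T : X → Matrix (Fin d) (Fin d) ℂ := fun x => (hρ x).1.sqrt with hT_def
  have hT : ∀ x, (T x).PosSemidef := fun x => (hρ x).1.posSemidef_sqrt
  have hTT : ∀ x, T x * T x = ρ x := fun x => (hρ x).1.sqrt_mul_self
  set S : Matrix (Fin d) (Fin d) ℂ := hω.1.sqrt with hS_def
  have hSpsd : S.PosSemidef := hω.1.posSemidef_sqrt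
  have hSS : S * S = ω := hω.1.sqrt_mul_self
  set A : Matrix (Fin d) (X × Fin d) ℂ :=
    Matrix.of (fun i q => ((Real.sqrt (p q.1) : ℝ) : ℂ) * T q.1 i q.2) with hA_def
  have hAA : A * Aᴴ = ρbar := by
    ext i k
    rw [Matrix.mul_apply, Fintype.sum_prod_type, hρbar_def, Matrix.sum_apply]
    apply Finset.sum_congr rfl
    intro x _
    have hpp : ((Real.sqrt (p x) : ℝ) : ℂ) * ((Real.sqrt (p x) : ℝ) : ℂ)
        = ((p x : ℝ) : ℂ) := by
      rw [← Complex.ofReal_mul, Real.mul_self_sqrt (hp x)]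
    have key : ∀ j, A i (x, j) * (Aᴴ) (x, j) k
        = ((p x : ℝ) : ℂ) * (T x i j * (starRingEnd ℂ) (T x k j)) := by
      intro j
      simp only [hA_def, Matrix.of_apply, Matrix.conjTranspose_apply, Complex.star_def,
        _root_.map_mul, Complex.conj_ofReal]
      linear_combination (T x i j * (starRingEnd ℂ) (T x k j)) * hpp
    rw [Finset.sum_congr rfl (fun j _ => key j), ← Finset.mul_sum]
    have hsum : ∑ j, T x i j * (starRingEnd ℂ) (T x k j) = (T x * (T x)ᴴ) i k := by
      simp only [Matrix.mul_apply, Matrix.conjTranspose_apply]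
      rfl
    rw [hsum, (hT x).1.eq, hTT x, hsmul_eq x]
    simp [Matrix.smul_apply]
  set M : Matrix (Fin d) (X × Fin d) ℂ := S * A with hM_def
  have hMM : M * Mᴴ = S * ρbar * S := by
    rw [hM_def, Matrix.conjTranspose_mul, hSpsd.1.eq]
    calc S * A * (Aᴴ * S) = S * ((A * Aᴴ) * S) := by simp only [Matrix.mul_assoc]
      _ = S * ρbar * S := by rw [hAA]; simp only [Matrix.mul_assoc]
  obtain ⟨E, hE⟩ := exists_coisometry (n := Fin d) (m := X) (Classical.arbitrary X)
  obtain ⟨W, hWW, hMHW⟩ := polar_rect M E hE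
  set H : Matrix (Fin d) (Fin d) ℂ := (Matrix.posSemidef_self_mul_conjTranspose M).sqrt
    with hH_def
  have hHpsd : H.PosSemidef := (Matrix.posSemidef_self_mul_conjTranspose M).posSemidef_sqrt
  set B : Matrix (Fin d) (X × Fin d) ℂ := S * W with hB_def
  have hBB : B * Bᴴ = ω := by
    rw [hB_def, Matrix.conjTranspose_mul, hSpsd.1.eq]
    calc S * W * (Wᴴ * S) = S * ((W * Wᴴ) * S) := by simp only [Matrix.mul_assoc]
      _ = ω := by rw [hWW, Matrix.one_mul, hSS]
  set Bx : X → Matrix (Fin d) (Fin d) ℂ := fun x => Matrix.of (fun i j => B i (x, j))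
    with hBx_def
  have hBsum : ∑ x : X, (Bx x * (Bx x)ᴴ) = ω := by rw [← hBB]; exact block_sum B
  set q : X → ℝ := fun x => ((Bx x * (Bx x)ᴴ).trace).re with hq_def
  have hqpsd : ∀ x, (Bx x * (Bx x)ᴴ).PosSemidef :=
    fun x => Matrix.posSemidef_self_mul_conjTranspose (Bx x)
  have hq0 : ∀ x, 0 ≤ q x := fun x => psd_trace_re_nonneg (hqpsd x)
  have hq1 : ∑ x, q x = 1 := by
    have h1 : (∑ x : X, (Bx x * (Bx x)ᴴ)).trace = 1 := by rw [hBsum, hω.2]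
    rw [Matrix.trace_sum] at h1
    have := congrArg Complex.re h1
    rw [Complex.re_sum] at this
    simpa [hq_def] using this
  set c : X → ℂ := fun x => ((Real.sqrt (p x) : ℝ) : ℂ) * ((T x * Bx x).trace) with hc_def
  have hMconj : Mᴴ = Aᴴ * S := by rw [hM_def, Matrix.conjTranspose_mul, hSpsd.1.eq]
  have hMWH : Mᴴ = Wᴴ * H := by rw [hMHW, Matrix.conjTranspose_mul, hHpsd.1.eq]
  -- Σ c = Tr H
  have hc_sum : ∑ x, c x = H.trace := by
    have step1 : (Aᴴ * B).trace = ∑ x, c x := by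
      rw [trace_conjTranspose_mul]
      rw [Fintype.sum_prod_type]
      have swap1 : ∀ i : Fin d, ∑ qq : X × Fin d, (starRingEnd ℂ) (A i qq) * B i qq
          = ∑ x : X, ∑ j : Fin d, (starRingEnd ℂ) (A i (x, j)) * B i (x, j) := by
        intro i
        rw [Fintype.sum_prod_type]
      rw [Finset.sum_congr rfl (fun i _ => swap1 i), Finset.sum_comm]
      apply Finset.sum_congr rfl
      intro x _
      have hcx : c x = ∑ pr : Fin d × Fin d,
          ((Real.sqrt (p x) : ℝ) : ℂ) * ((starRingEnd ℂ) (T x pr.1 pr.2) * Bx x pr.1 pr.2) := by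
        simp only [hc_def]
        conv_lhs => rw [show T x * Bx x = (T x)ᴴ * Bx x by rw [(hT x).1.eq]]
        rw [trace_conjTranspose_mul, Finset.mul_sum]
      rw [hcx, Fintype.sum_prod_type]
      apply Finset.sum_congr rfl
      intro i _
      apply Finset.sum_congr rfl
      intro j _
      simp only [hA_def, hBx_def, Matrix.of_apply, Complex.star_def, _root_.map_mul,
        Complex.conj_ofReal]
      ring
    have step2 : (Aᴴ * B).trace = H.trace := by
      have e1 : Aᴴ * B = (Wᴴ * H) * W := by
        rw [hB_def, ← Matrix.mul_assoc, ← hMconj, hMWH]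
      rw [e1, Matrix.trace_mul_comm, ← Matrix.mul_assoc, hWW, Matrix.one_mul]
    rw [← step1, step2]
  -- fidelity of the average state
  have hF_eq : fidelity ρbar ω = H.trace.re := by
    have e0 : fidelity ρbar ω = traceNorm (hρbar.sqrt * S) := by
      unfold fidelity
      rw [psqrt_eq hρbar, psqrt_eq hω.1]
    have e1 : (hρbar.sqrt * S)ᴴ * (hρbar.sqrt * S) = M * Mᴴ := by
      rw [Matrix.conjTranspose_mul, hSpsd.1.eq, hρbar.posSemidef_sqrt.1.eq]
      calc S * hρbar.sqrt * (hρbar.sqrt * S)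
          = S * ((hρbar.sqrt * hρbar.sqrt) * S) := by simp only [Matrix.mul_assoc]
        _ = S * ρbar * S := by rw [hρbar.sqrt_mul_self]; simp only [Matrix.mul_assoc]
        _ = M * Mᴴ := hMM.symm
    rw [e0]
    show ((Matrix.posSemidef_conjTranspose_mul_self (hρbar.sqrt * S)).sqrt.trace).re = _
    rw [sqrt_congr (Matrix.posSemidef_conjTranspose_mul_self (hρbar.sqrt * S))
      (Matrix.posSemidef_self_mul_conjTranspose M) e1]
  set F : ℝ := fidelity ρbar ω with hF_def
  have hF0 : 0 ≤ F := by rw [hF_eq]; exact psd_trace_re_nonneg hHpsd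
  have hF2 : 1 - ε ^ 2 ≤ F ^ 2 := by
    have hd : Real.sqrt (1 - F ^ 2) ≤ ε := hdist
    rcases le_or_gt (1 - F ^ 2) 0 with h | h
    · nlinarith
    · have hs := Real.sq_sqrt h.le
      have h2 : (Real.sqrt (1 - F ^ 2)) ^ 2 ≤ ε ^ 2 :=
        pow_le_pow_left₀ (Real.sqrt_nonneg _) hd 2
      rw [hs] at h2
      linarith
  have hFc : F ≤ ∑ x, ‖c x‖ := by
    have h1 : H.trace = ((F : ℝ) : ℂ) := by rw [psd_trace_eq_re hHpsd, hF_eq]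
    calc F = ‖H.trace‖ := by
          rw [h1, Complex.norm_real, Real.norm_eq_abs, abs_of_nonneg hF0]
      _ = ‖∑ x, c x‖ := by rw [hc_sum]
      _ ≤ ∑ x, ‖c x‖ := norm_sum_le _ _
  have hcs : ∀ x, ‖c x‖ ^ 2 ≤ p x * q x := by
    intro x
    have htr : (T x * Bx x).trace
        = ∑ pr : Fin d × Fin d, (starRingEnd ℂ) (T x pr.1 pr.2) * Bx x pr.1 pr.2 := by
      conv_lhs => rw [show T x * Bx x = (T x)ᴴ * Bx x by rw [(hT x).1.eq]]
      exact trace_conjTranspose_mul _ _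
    have hcx := cs_complex (fun pr : Fin d × Fin d => T x pr.1 pr.2)
      (fun pr : Fin d × Fin d => Bx x pr.1 pr.2)
    rw [← htr] at hcx
    have hT2 : (∑ pr : Fin d × Fin d, ‖T x pr.1 pr.2‖ ^ 2) = 1 := by
      have hs := sum_normsq_eq_trace (T x)
      rw [(hT x).1.eq, hTT x, (hρ x).2] at hs
      have h7 := congrArg Complex.re hs
      rw [Complex.one_re, Complex.ofReal_re] at h7
      exact h7.symm
    have hB2 : (∑ pr : Fin d × Fin d, ‖Bx x pr.1 pr.2‖ ^ 2) = q x := by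
      have hs := sum_normsq_eq_trace (Bx x)
      rw [Matrix.trace_mul_comm] at hs
      have h7 := congrArg Complex.re hs
      rw [Complex.ofReal_re] at h7
      simp only [hq_def]
      exact h7.symm
    have hnorm : ‖c x‖ = Real.sqrt (p x) * ‖(T x * Bx x).trace‖ := by
      simp only [hc_def]
      rw [norm_mul, Complex.norm_real, Real.norm_eq_abs,
        abs_of_nonneg (Real.sqrt_nonneg _)]
    rw [hnorm, mul_pow, Real.sq_sqrt (hp x)]
    calc p x * ‖(T x * Bx x).trace‖ ^ 2
        ≤ p x * ((∑ pr : Fin d × Fin d, ‖T x pr.1 pr.2‖ ^ 2)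
            * (∑ pr : Fin d × Fin d, ‖Bx x pr.1 pr.2‖ ^ 2)) :=
          mul_le_mul_of_nonneg_left hcx (hp x)
      _ = p x * q x := by rw [hT2, hB2, one_mul]
  -- select a good index
  set t : ℝ := 1 - (ε + μ) ^ 2 with ht_def
  set κ : ℝ := ((ε + μ) ^ 2 - ε ^ 2) / (Fintype.card X : ℝ) with hκ_def
  have hδpos : 0 < (ε + μ) ^ 2 - ε ^ 2 := by nlinarith
  have hcard : 0 < (Fintype.card X : ℝ) := by
    have := Fintype.card_pos (α := X)
    exact_mod_cast this
  have hκpos : 0 < κ := div_pos hδpos hcard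
  have htpos : 0 ≤ t := by nlinarith
  obtain ⟨x, hxq, hxc, hxp, hxqpos⟩ := exists_good_index p q c F t κ hp hq0 hq1 hp1 hcs hF0 hFc
    htpos hκpos (by rw [ht_def, hκ_def]; field_simp; nlinarith [hF2])
  -- the witness state
  set ω' : Matrix (Fin d) (Fin d) ℂ := (((q x)⁻¹ : ℝ) : ℂ) • (Bx x * (Bx x)ᴴ) with hω'_def
  have hω'psd : ω'.PosSemidef := psd_smul_real (hqpsd x) (inv_nonneg.mpr (hq0 x))
  have hω'density : IsDensity ω' := by
    refine ⟨hω'psd, ?_⟩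
    rw [hω'_def, Matrix.trace_smul]
    rw [psd_trace_eq_re (hqpsd x)]
    show (((q x)⁻¹ : ℝ) : ℂ) • ((q x : ℝ) : ℂ) = 1
    rw [smul_eq_mul, ← Complex.ofReal_mul, inv_mul_cancel₀ (ne_of_gt hxqpos)]
    simp
  -- fidelity lower bound for the selected index
  have hfid : t ≤ (fidelity (ρ x) ω') ^ 2 := by
    have hkey : ‖(T x * Bx x).trace‖ ≤ Real.sqrt (q x) * fidelity (ρ x) ω' :=
      fidelity_ge_of_factor (hρ x).1 (Bx x) hxqpos
    set f : ℝ := fidelity (ρ x) ω' with hf_def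
    have hf0 : 0 ≤ f := traceNorm_nonneg' _
    have hnorm : ‖c x‖ = Real.sqrt (p x) * ‖(T x * Bx x).trace‖ := by
      simp only [hc_def]
      rw [norm_mul, Complex.norm_real, Real.norm_eq_abs,
        abs_of_nonneg (Real.sqrt_nonneg _)]
    have h5 : ‖(T x * Bx x).trace‖ ^ 2 ≤ q x * f ^ 2 := by
      have := pow_le_pow_left₀ (norm_nonneg _) hkey 2
      rw [mul_pow, Real.sq_sqrt (hq0 x)] at this
      exact this
    have h4 : ‖c x‖ ^ 2 = p x * ‖(T x * Bx x).trace‖ ^ 2 := by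
      rw [hnorm, mul_pow, Real.sq_sqrt (hp x)]
    have h6 : t * (p x * q x) ≤ f ^ 2 * (p x * q x) := by
      calc t * (p x * q x) ≤ ‖c x‖ ^ 2 := hxc
        _ = p x * ‖(T x * Bx x).trace‖ ^ 2 := h4
        _ ≤ p x * (q x * f ^ 2) := mul_le_mul_of_nonneg_left h5 (hp x)
        _ = f ^ 2 * (p x * q x) := by ring
    exact le_of_mul_le_mul_right h6 (mul_pos hxp hxqpos)
  have hpd : purifiedDist (ρ x) ω' ≤ ε + μ := by
    rw [purifiedDist]
    have h1 : 1 - (fidelity (ρ x) ω') ^ 2 ≤ (ε + μ) ^ 2 := by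
      rw [ht_def] at hfid
      linarith
    calc Real.sqrt (1 - (fidelity (ρ x) ω') ^ 2) ≤ Real.sqrt ((ε + μ) ^ 2) :=
          Real.sqrt_le_sqrt h1
      _ = ε + μ := Real.sqrt_sq (by linarith)
  -- Loewner bound
  have hloe : loewnerLE ω' (((l * ((Fintype.card X : ℝ) / ((ε+μ)^2 - ε^2)) : ℝ) : ℂ) • σ) := by
    set C : ℝ := (Fintype.card X : ℝ) / ((ε + μ) ^ 2 - ε ^ 2) with hC_def
    have hqC : (q x)⁻¹ ≤ C := by
      have h1 : κ⁻¹ = C := by rw [hκ_def, inv_div]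
      rw [← h1]
      exact inv_anti₀ hκpos hxq
    have hpsd1 : (((l : ℝ) : ℂ) • σ - (Bx x * (Bx x)ᴴ)).PosSemidef := by
      have h1 : ((l : ℂ) • σ - ω).PosSemidef := hlω
      have h2 : (ω - (Bx x * (Bx x)ᴴ)).PosSemidef := by
        have he : ω - (Bx x * (Bx x)ᴴ) = ∑ y ∈ Finset.univ.erase x, (Bx y * (Bx y)ᴴ) := by
          rw [← hBsum, Finset.sum_erase_eq_sub (Finset.mem_univ x)]
        rw [he]
        exact psd_sum _ _ (fun y _ => hqpsd y)
      have h3 := Matrix.PosSemidef.add h1 h2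
      rw [sub_add_sub_cancel] at h3
      exact h3
    show ((((l * C : ℝ)) : ℂ) • σ - ω').PosSemidef
    have decomp : (((l * C : ℝ)) : ℂ) • σ - ω'
        = ((((l * C - l * (q x)⁻¹ : ℝ)) : ℂ) • σ)
          + ((((q x)⁻¹ : ℝ) : ℂ) • (((l : ℝ) : ℂ) • σ - (Bx x * (Bx x)ᴴ))) := by
      simp only [hω'_def]
      ext i j
      simp only [Matrix.sub_apply, Matrix.add_apply, Matrix.smul_apply, smul_eq_mul,
        Matrix.smul_apply]
      push_cast
      ring
    rw [decomp]
    refine Matrix.PosSemidef.add (psd_smul_real hσ.1 ?_) (psd_smul_real hpsd1 (inv_nonneg.mpr (hq0 x)))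
    have : l * (q x)⁻¹ ≤ l * C := mul_le_mul_of_nonneg_left hqC hl
    linarith
  exact ⟨x, ω', hω'density, hpd, hloe⟩

end AQC

theorem approx_quasi_concavity_smooth_dmax {d : ℕ} {X : Type*} [Fintype X] [Nonempty X]
    (p : X → ℝ) (hp : ∀ x, 0 ≤ p x) (hp1 : ∑ x, p x = 1)
    (ρ : X → Matrix (Fin d) (Fin d) ℂ) (hρ : ∀ x, IsDensity (ρ x))
    (σ : Matrix (Fin d) (Fin d) ℂ) (hσ : IsDensity σ)
    (ε μ : ℝ) (hε0 : 0 < ε) (hε1 : ε < 1) (hμ0 : 0 < μ) (hμ1 : μ < 1)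
    (hεμ : ε + μ ≤ 1) :
    ⨅ x, DmaxSmooth (ε + μ) (ρ x) σ
      ≤ DmaxSmooth ε (∑ x, p x • ρ x) σ
        + ((Real.logb 2 ((Fintype.card X : ℝ) / ((ε + μ) ^ 2 - ε ^ 2)) : ℝ) : EReal) := by
  classical
  set L : ℝ := Real.logb 2 ((Fintype.card X : ℝ) / ((ε + μ) ^ 2 - ε ^ 2)) with hL_def
  set C : ℝ := (Fintype.card X : ℝ) / ((ε + μ) ^ 2 - ε ^ 2) with hC_def
  have hδpos : 0 < (ε + μ) ^ 2 - ε ^ 2 := by nlinarith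
  have hcard : 0 < (Fintype.card X : ℝ) := by
    have := Fintype.card_pos (α := X)
    exact_mod_cast this
  have hCpos : 0 < C := div_pos hcard hδpos
  show (⨅ x, DmaxSmooth (ε + μ) (ρ x) σ) ≤ DmaxSmooth ε (∑ x, p x • ρ x) σ + (L : EReal)
  rw [DmaxSmooth]
  apply ereal_le_sInf_add
  rintro s ⟨ω, hωd, hdist, rfl⟩
  rw [Dmax]
  apply ereal_le_sInf_add
  rintro t ⟨l, hl0, hlω, rfl⟩
  -- l ≥ 1
  have hl1 : 1 ≤ l := by
    have hmono := trace_re_mono hlω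
    rw [hωd.2, Matrix.trace_smul, smul_eq_mul, hσ.2, mul_one] at hmono
    simpa using hmono
  have hlpos : 0 < l := lt_of_lt_of_le one_pos hl1
  obtain ⟨x, ω', hω'd, hpd, hloe⟩ := construction p hp hp1 ρ hρ σ hσ ε μ hε0 hμ0 hεμ
    ω hωd hdist l hl0 hlω
  have step1 : (⨅ y, DmaxSmooth (ε + μ) (ρ y) σ) ≤ DmaxSmooth (ε + μ) (ρ x) σ :=
    iInf_le _ x
  have step2 : DmaxSmooth (ε + μ) (ρ x) σ ≤ Dmax ω' σ := by
    rw [DmaxSmooth]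
    exact sInf_le ⟨ω', hω'd, hpd, rfl⟩
  have step3 : Dmax ω' σ ≤ ((Real.logb 2 (l * C) : ℝ) : EReal) := by
    rw [Dmax]
    exact sInf_le ⟨l * C, by positivity, hloe, rfl⟩
  have hlog : Real.logb 2 (l * C) = Real.logb 2 l + L := by
    rw [Real.logb_mul (ne_of_gt hlpos) (ne_of_gt hCpos), hL_def]
  calc (⨅ y, DmaxSmooth (ε + μ) (ρ y) σ) ≤ Dmax ω' σ := le_trans step1 step2
    _ ≤ ((Real.logb 2 (l * C) : ℝ) : EReal) := step3
    _ = ((Real.logb 2 l : ℝ) : EReal) + (L : EReal) := by rw [hlog, EReal.coe_add]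


end
end

section
/- Purified distance bound from joint fidelity loss: let ε ∈ (0,1) and δ ∈ [0, √(1−ε²)). Suppose (p(x))_x, (q(x))_x are probability distributions on a finite set X and F_x ∈ [0,1] are numbers with Σ_x √(p(x)q(x)) F_x = √(1−ε²). Then, letting X_δ = { x : q(x) ≥ δ²/|X| }, there exists x̄ ∈ X_δ with F_{x̄} ≥ √(1−ε²−δ²). -/
set_option maxHeartbeats 1000000

theorem purified_distance_from_joint_fidelity_loss {X : Type*} [Fintype X] [Nonempty X]
    (ε δ : ℝ) (hε0 : 0 < ε) (hε1 : ε < 1)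
    (hδ0 : 0 ≤ δ) (hδ1 : δ < Real.sqrt (1 - ε ^ 2))
    (p q : X → ℝ) (hp : ∀ x, 0 ≤ p x) (hp1 : ∑ x, p x = 1)
    (hq : ∀ x, 0 ≤ q x) (hq1 : ∑ x, q x = 1)
    (F : X → ℝ) (hF : ∀ x, F x ∈ Set.Icc (0 : ℝ) 1)
    (hsum : ∑ x, Real.sqrt (p x * q x) * F x = Real.sqrt (1 - ε ^ 2)) :
    ∃ x : X, δ ^ 2 / (Fintype.card X : ℝ) ≤ q x ∧
      Real.sqrt (1 - ε ^ 2 - δ ^ 2) ≤ F x := by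
  classical
  by_contra hcon
  push_neg at hcon
  set N := (Fintype.card X : ℝ) with hN
  have hNpos : 0 < N := by rw [hN]; exact_mod_cast Fintype.card_pos
  set c := δ ^ 2 / N with hc
  have hc0 : 0 ≤ c := by positivity
  have h1e : (0:ℝ) ≤ 1 - ε ^ 2 := by nlinarith
  have hδsq : δ ^ 2 < 1 - ε ^ 2 := by
    have := pow_lt_pow_left₀ hδ1 hδ0 (n := 2) (by norm_num)
    rwa [Real.sq_sqrt h1e] at this
  set a := Real.sqrt (1 - ε ^ 2 - δ ^ 2) with ha
  have ha0 : 0 < a := Real.sqrt_pos.mpr (by linarith)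
  have hasq : a ^ 2 = 1 - ε ^ 2 - δ ^ 2 := Real.sq_sqrt (by linarith)
  set S : Finset X := Finset.univ.filter (fun x => c ≤ q x) with hSdef
  set T : Finset X := Finset.univ.filter (fun x => ¬ c ≤ q x) with hTdef
  have hFS : ∀ x ∈ S, F x < a := by
    intro x hx
    exact hcon x (by simpa [hSdef] using hx)
  -- basic splits
  have hsplit : ∀ f : X → ℝ, ∑ x, f x = ∑ x ∈ S, f x + ∑ x ∈ T, f x := fun f =>
    (Finset.sum_filter_add_sum_filter_not Finset.univ _ f).symm
  set lam := ∑ x ∈ S, p x with hlam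
  have hlam0 : 0 ≤ lam := Finset.sum_nonneg fun x _ => hp x
  have hlam1 : lam ≤ 1 := by
    rw [← hp1]
    exact Finset.sum_le_sum_of_subset_of_nonneg (Finset.subset_univ S) fun x _ _ => hp x
  have hpT : ∑ x ∈ T, p x = 1 - lam := by
    have := hsplit p; rw [hp1] at this; linarith
  have hqS1 : ∑ x ∈ S, q x ≤ 1 := by
    rw [← hq1]
    exact Finset.sum_le_sum_of_subset_of_nonneg (Finset.subset_univ S) fun x _ _ => hq x
  have hqT : ∑ x ∈ T, q x ≤ δ ^ 2 := by
    have h1 : ∑ x ∈ T, q x ≤ T.card • c := by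
      refine Finset.sum_le_card_nsmul T q c fun x hx => ?_
      have : ¬ c ≤ q x := by simpa [hTdef] using hx
      linarith
    have h2 : (T.card : ℝ) * c ≤ N * c := by
      have : (T.card : ℝ) ≤ N := by
        rw [hN]; exact_mod_cast Finset.card_le_univ T
      exact mul_le_mul_of_nonneg_right this hc0
    have h3 : N * c = δ ^ 2 := by
      rw [hc, mul_div_assoc', mul_comm, mul_div_assoc, div_self hNpos.ne', mul_one]
    calc ∑ x ∈ T, q x ≤ (T.card : ℝ) * c := by simpa [nsmul_eq_mul] using h1
      _ ≤ N * c := h2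
      _ = δ ^ 2 := h3
  -- bound the tail sum T₂
  have hT2 : ∑ x ∈ T, Real.sqrt (p x * q x) * F x ≤ δ * Real.sqrt (1 - lam) := by
    have key : ∑ x ∈ T, Real.sqrt (p x * q x) * F x
        ≤ Real.sqrt (∑ x ∈ T, p x) * Real.sqrt (∑ x ∈ T, q x * F x ^ 2) := by
      have cs := Real.sum_mul_le_sqrt_mul_sqrt T (fun x => Real.sqrt (p x))
        (fun x => Real.sqrt (q x) * F x)
      have e1 : ∀ x, Real.sqrt (p x) * (Real.sqrt (q x) * F x)
          = Real.sqrt (p x * q x) * F x := by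
        intro x; rw [Real.sqrt_mul (hp x)]; ring
      have e2 : ∀ x, (Real.sqrt (p x)) ^ 2 = p x := fun x => Real.sq_sqrt (hp x)
      have e3 : ∀ x, (Real.sqrt (q x) * F x) ^ 2 = q x * F x ^ 2 := by
        intro x; rw [mul_pow, Real.sq_sqrt (hq x)]
      simp only [e1, e2, e3] at cs
      exact cs
    have hqF : ∑ x ∈ T, q x * F x ^ 2 ≤ δ ^ 2 := by
      refine le_trans (Finset.sum_le_sum fun x _ => ?_) hqT
      have h1 := (hF x).1
      have h2 := (hF x).2
      have hF2 : F x ^ 2 ≤ 1 := by nlinarith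
      exact mul_le_of_le_one_right (hq x) hF2
    have h4 : Real.sqrt (∑ x ∈ T, p x) * Real.sqrt (∑ x ∈ T, q x * F x ^ 2)
        ≤ Real.sqrt (1 - lam) * δ := by
      rw [hpT]
      refine mul_le_mul_of_nonneg_left ?_ (Real.sqrt_nonneg _)
      calc Real.sqrt (∑ x ∈ T, q x * F x ^ 2) ≤ Real.sqrt (δ ^ 2) :=
            Real.sqrt_le_sqrt hqF
        _ = δ := Real.sqrt_sq hδ0
    linarith [key, h4]
  set B := ∑ x ∈ S, Real.sqrt (p x * q x) with hB
  have hB0 : 0 ≤ B := Finset.sum_nonneg fun x _ => Real.sqrt_nonneg _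
  have hBle : B ≤ Real.sqrt lam := by
    have cs := Real.sum_sqrt_mul_sqrt_le S hp hq
    have e1 : ∀ x, Real.sqrt (p x) * Real.sqrt (q x) = Real.sqrt (p x * q x) := by
      intro x; rw [Real.sqrt_mul (hp x)]
    simp only [e1] at cs
    calc B ≤ Real.sqrt lam * Real.sqrt (∑ x ∈ S, q x) := cs
      _ ≤ Real.sqrt lam * 1 := by
          refine mul_le_mul_of_nonneg_left ?_ (Real.sqrt_nonneg _)
          calc Real.sqrt (∑ x ∈ S, q x) ≤ Real.sqrt 1 := Real.sqrt_le_sqrt hqS1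
            _ = 1 := Real.sqrt_one
      _ = Real.sqrt lam := mul_one _
  -- final convexity bound : a√λ + δ√(1-λ) ≤ √(1-ε²)
  have hfinal : a * Real.sqrt lam + δ * Real.sqrt (1 - lam) ≤ Real.sqrt (1 - ε ^ 2) := by
    set u := Real.sqrt lam with hu
    set v := Real.sqrt (1 - lam) with hv
    have hu0 : 0 ≤ u := Real.sqrt_nonneg _
    have hv0 : 0 ≤ v := Real.sqrt_nonneg _
    have husq : u ^ 2 = lam := Real.sq_sqrt hlam0
    have hvsq : v ^ 2 = 1 - lam := Real.sq_sqrt (by linarith)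
    have hsq : (a * u + δ * v) ^ 2 ≤ 1 - ε ^ 2 := by
      nlinarith [sq_nonneg (a * v - δ * u)]
    calc a * u + δ * v = Real.sqrt ((a * u + δ * v) ^ 2) :=
          (Real.sqrt_sq (by positivity)).symm
      _ ≤ Real.sqrt (1 - ε ^ 2) := Real.sqrt_le_sqrt hsq
  have hsplit' := hsplit (fun x => Real.sqrt (p x * q x) * F x)
  rw [hsum] at hsplit'
  by_cases hBz : B = 0
  · -- tail case: whole mass outside S
    have hT1 : ∑ x ∈ S, Real.sqrt (p x * q x) * F x ≤ 0 := by
      rw [← hBz, hB]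
      refine Finset.sum_le_sum fun x _ => ?_
      have := (hF x).2
      nlinarith [Real.sqrt_nonneg (p x * q x)]
    have hδle : δ * Real.sqrt (1 - lam) ≤ δ := by
      calc δ * Real.sqrt (1 - lam) ≤ δ * 1 := by
            refine mul_le_mul_of_nonneg_left ?_ hδ0
            calc Real.sqrt (1 - lam) ≤ Real.sqrt 1 := Real.sqrt_le_sqrt (by linarith)
              _ = 1 := Real.sqrt_one
        _ = δ := mul_one _
    linarith [hT2]
  · have hBpos : 0 < B := lt_of_le_of_ne hB0 (Ne.symm hBz)
    obtain ⟨x₀, hx₀S, hx₀⟩ : ∃ x ∈ S, 0 < Real.sqrt (p x * q x) := by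
      by_contra hall
      push_neg at hall
      have : B = 0 := Finset.sum_eq_zero fun x hx =>
        le_antisymm (hall x hx) (Real.sqrt_nonneg _)
      exact hBz this
    have hT1 : ∑ x ∈ S, Real.sqrt (p x * q x) * F x < a * B := by
      have hle : ∀ x ∈ S, Real.sqrt (p x * q x) * F x ≤ Real.sqrt (p x * q x) * a :=
        fun x hx => mul_le_mul_of_nonneg_left (hFS x hx).le (Real.sqrt_nonneg _)
      have hlt : Real.sqrt (p x₀ * q x₀) * F x₀ < Real.sqrt (p x₀ * q x₀) * a :=
        mul_lt_mul_of_pos_left (hFS x₀ hx₀S) hx₀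
      have hstep : ∑ x ∈ S, Real.sqrt (p x * q x) * F x
          < ∑ x ∈ S, Real.sqrt (p x * q x) * a :=
        Finset.sum_lt_sum hle ⟨x₀, hx₀S, hlt⟩
      have heq : ∑ x ∈ S, Real.sqrt (p x * q x) * a = a * B := by
        rw [hB, Finset.mul_sum]
        exact Finset.sum_congr rfl fun x _ => mul_comm _ _
      linarith
    have haB : a * B ≤ a * Real.sqrt lam := mul_le_mul_of_nonneg_left hBle ha0.le
    linarith [hT2, hfinal]
end
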